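/- Let (g, [·,·]_g, ▷) be a post-Lie algebra over k and let ρ : g_▷ → Der_k(R) be a Lie algebra homomorphism from the sub-adjacent Lie algebra. On the R-module L = R ⊗ g define [f₁ ⊗ x₁, f₂ ⊗ x₂]_L = f₁f₂ ⊗ [x₁,x₂]_g, (f₁ ⊗ x₁) ⊵ (f₂ ⊗ x₂) = f₁·ρ(x₁)(f₂) ⊗ x₂ + f₁f₂ ⊗ (x₁ ▷ x₂), and the R-linear anchor ρ̄(f ⊗ x) = f·ρ(x). Then (R, L, [·,·]_L, ρ̄, ⊵) is a post-Lie-Rinehart algebra (the action post-Lie-Rinehart algebra), and its sub-adjacent bracket satisfies [f₁ ⊗ x₁, f₂ ⊗ x₂]_⊵ = f₁·ρ(x₁)(f₂) ⊗ x₂ − f₂·ρ(x₂)(f₁) ⊗ x₁ + f₁f₂ ⊗ [x₁,x₂]_▷. -/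

import Mathlib

open scoped TensorProduct

/-!
STATEMENT 14: the action post-Lie-Rinehart algebra.  Given a post-Lie algebra
`(g, [·,·]_g, ▷)` over `k` and a Lie algebra homomorphism `ρ : g_▷ → Der_k(R)` from its
sub-adjacent Lie algebra, the `R`-module `L = R ⊗ g` carries a post-Lie-Rinehart algebra
structure with `[f₁ ⊗ x₁, f₂ ⊗ x₂]_L = f₁f₂ ⊗ [x₁,x₂]_g`,
`(f₁ ⊗ x₁) ⊵ (f₂ ⊗ x₂) = f₁·ρ(x₁)(f₂) ⊗ x₂ + f₁f₂ ⊗ (x₁ ▷ x₂)` and anchor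
`ρ̄(f ⊗ x) = f·ρ(x)`, whose sub-adjacent bracket is
`[f₁ ⊗ x₁, f₂ ⊗ x₂]_⊵ = f₁·ρ(x₁)(f₂) ⊗ x₂ − f₂·ρ(x₂)(f₁) ⊗ x₁ + f₁f₂ ⊗ [x₁,x₂]_▷`.
-/

open TensorProduct

section St14Aux

variable {k R g : Type*} [Field k] [CharZero k] [CommRing R] [Algebra k R]
  [LieRing g] [LieAlgebra k g]

/-- The `R`-bilinear base-change bracket on `R ⊗[k] g`, as a bilinear map. -/
noncomputable def st14bL : (R ⊗[k] g) →ₗ[R] (R ⊗[k] g) →ₗ[R] (R ⊗[k] g) :=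
  LinearMap.mk₂ R (fun x y => ⁅x, y⁆) add_lie smul_lie lie_add lie_smul

@[simp] lemma st14bL_apply (x y : R ⊗[k] g) : st14bL x y = ⁅x, y⁆ := rfl

lemma st14bL_tmul (f₁ f₂ : R) (x₁ x₂ : g) :
    st14bL (f₁ ⊗ₜ[k] x₁) (f₂ ⊗ₜ[k] x₂) = (f₁ * f₂) ⊗ₜ[k] ⁅x₁, x₂⁆ := rfl

/-- The derivation-plus-product operator `D x = ρ x ⊗ id + id ⊗ t x`, linearly in `x`. -/
noncomputable def st14D (t : g →ₗ[k] g →ₗ[k] g) (ρ : g →ₗ[k] Derivation k R R) :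
    g →ₗ[k] (R ⊗[k] g →ₗ[k] R ⊗[k] g) where
  toFun x := TensorProduct.map (ρ x).toLinearMap LinearMap.id
    + TensorProduct.map LinearMap.id (t x)
  map_add' x y := by
    apply TensorProduct.ext'
    intro f z
    simp [TensorProduct.add_tmul, TensorProduct.tmul_add]
    abel
  map_smul' c x := by
    apply TensorProduct.ext'
    intro f z
    simp [TensorProduct.smul_tmul, TensorProduct.tmul_smul, smul_add]

/-- The action product `tL (f ⊗ x) = f • D x`. -/
noncomputable def st14tL (t : g →ₗ[k] g →ₗ[k] g) (ρ : g →ₗ[k] Derivation k R R) :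
    (R ⊗[k] g) →ₗ[k] (R ⊗[k] g) →ₗ[k] (R ⊗[k] g) :=
  TensorProduct.lift <| LinearMap.mk₂ k (fun f x => f • st14D t ρ x)
    (fun f f' x => by rw [add_smul])
    (fun c f x => smul_assoc c f _)
    (fun f x y => by rw [map_add, smul_add])
    (fun c f x => by rw [map_smul, smul_comm])

lemma st14tL_tmul (t : g →ₗ[k] g →ₗ[k] g) (ρ : g →ₗ[k] Derivation k R R)
    (f₁ f₂ : R) (x₁ x₂ : g) :
    st14tL t ρ (f₁ ⊗ₜ[k] x₁) (f₂ ⊗ₜ[k] x₂)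
      = (f₁ * ρ x₁ f₂) ⊗ₜ[k] x₂ + (f₁ * f₂) ⊗ₜ[k] t x₁ x₂ := by
  simp [st14tL, st14D, TensorProduct.smul_tmul', smul_eq_mul, smul_add]

/-- The anchor `ρL (f ⊗ x) = f • ρ x` as a `k`-linear map. -/
noncomputable def st14ρL₀ (ρ : g →ₗ[k] Derivation k R R) :
    (R ⊗[k] g) →ₗ[k] Derivation k R R :=
  TensorProduct.lift <| LinearMap.mk₂ k (fun f x => f • ρ x)
    (fun f f' x => by rw [add_smul])
    (fun c f x => smul_assoc c f _)
    (fun f x y => by rw [map_add, smul_add])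
    (fun c f x => by rw [map_smul, smul_comm])

lemma st14ρL₀_smul (ρ : g →ₗ[k] Derivation k R R) (r : R) (z : R ⊗[k] g) :
    st14ρL₀ ρ (r • z) = r • st14ρL₀ ρ z := by
  induction z using TensorProduct.induction_on with
  | zero => simp
  | tmul f x =>
      simp [st14ρL₀, TensorProduct.smul_tmul', smul_eq_mul, mul_smul]
  | add u v hu hv => rw [smul_add, map_add, hu, hv, map_add, smul_add]

/-- The anchor `ρL (f ⊗ x) = f • ρ x`, as an `R`-linear map. -/
noncomputable def st14ρL (ρ : g →ₗ[k] Derivation k R R) :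
    (R ⊗[k] g) →ₗ[R] Derivation k R R where
  toFun := st14ρL₀ ρ
  map_add' x y := map_add _ x y
  map_smul' r z := st14ρL₀_smul ρ r z

lemma st14ρL_tmul (ρ : g →ₗ[k] Derivation k R R) (f : R) (x : g) :
    st14ρL ρ (f ⊗ₜ[k] x) = f • ρ x := rfl

end St14Aux

set_option linter.unusedSectionVars false

set_option linter.unusedSectionVars false in
set_option maxHeartbeats 1000000 in
theorem stmt14 {k R g : Type*} [Field k] [CharZero k] [CommRing R] [Algebra k R]
    [LieRing g] [LieAlgebra k g]
    -- the `k`-bilinear post-Lie product on the Lie algebra `g`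
    (t : g →ₗ[k] g →ₗ[k] g)
    (hpl1 : ∀ x y z : g, t x ⁅y, z⁆ = ⁅t x y, z⁆ + ⁅y, t x z⁆)
    (hpl2 : ∀ x y z : g,
      t (⁅x, y⁆ + t x y - t y x) z = t x (t y z) - t y (t x z))
    -- a Lie algebra homomorphism `ρ : g_▷ → Der_k(R)` from the sub-adjacent Lie algebra
    (ρ : g →ₗ[k] Derivation k R R)
    (hρ : ∀ x y : g, ρ (t x y - t y x + ⁅x, y⁆) = ⁅ρ x, ρ y⁆) :
    ∃ (bL : (R ⊗[k] g) →ₗ[R] (R ⊗[k] g) →ₗ[R] (R ⊗[k] g))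
      (tL : (R ⊗[k] g) →ₗ[k] (R ⊗[k] g) →ₗ[k] (R ⊗[k] g))
      (ρL : (R ⊗[k] g) →ₗ[R] Derivation k R R),
      -- the defining formulas of the action structure
      (∀ (f₁ f₂ : R) (x₁ x₂ : g),
          bL (f₁ ⊗ₜ[k] x₁) (f₂ ⊗ₜ[k] x₂) = (f₁ * f₂) ⊗ₜ[k] ⁅x₁, x₂⁆)
      ∧ (∀ (f₁ f₂ : R) (x₁ x₂ : g),
          tL (f₁ ⊗ₜ[k] x₁) (f₂ ⊗ₜ[k] x₂)
            = (f₁ * ρ x₁ f₂) ⊗ₜ[k] x₂ + (f₁ * f₂) ⊗ₜ[k] t x₁ x₂)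
      ∧ (∀ (f : R) (x : g), ρL (f ⊗ₜ[k] x) = f • ρ x)
      -- `(L, [·,·]_L)` is a Lie algebra with an `R`-bilinear bracket
      ∧ (∀ x : R ⊗[k] g, bL x x = 0)
      ∧ (∀ x y z : R ⊗[k] g, bL x (bL y z) + bL y (bL z x) + bL z (bL x y) = 0)
      -- `(L, [·,·]_L, ⊵)` is a post-Lie algebra
      ∧ (∀ x y z : R ⊗[k] g, tL x (bL y z) = bL (tL x y) z + bL y (tL x z))
      ∧ (∀ x y z : R ⊗[k] g,
          tL (bL x y + tL x y - tL y x) z = tL x (tL y z) - tL y (tL x z))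
      -- the anchor is a Lie algebra homomorphism from the sub-adjacent Lie algebra
      ∧ (∀ x y : R ⊗[k] g,
          ρL (tL x y - tL y x + bL x y) = ⁅ρL x, ρL y⁆)
      -- the compatibility conditions
      ∧ (∀ (f : R) (x y : R ⊗[k] g), tL (f • x) y = f • tL x y)
      ∧ (∀ (f : R) (x y : R ⊗[k] g), tL x (f • y) = f • tL x y + ρL x f • y)
      -- the sub-adjacent bracket
      ∧ (∀ (f₁ f₂ : R) (x₁ x₂ : g),
          tL (f₁ ⊗ₜ[k] x₁) (f₂ ⊗ₜ[k] x₂) - tL (f₂ ⊗ₜ[k] x₂) (f₁ ⊗ₜ[k] x₁)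
              + bL (f₁ ⊗ₜ[k] x₁) (f₂ ⊗ₜ[k] x₂)
            = (f₁ * ρ x₁ f₂) ⊗ₜ[k] x₂ - (f₂ * ρ x₂ f₁) ⊗ₜ[k] x₁
              + (f₁ * f₂) ⊗ₜ[k] (t x₁ x₂ - t x₂ x₁ + ⁅x₁, x₂⁆)) := by
  have hρ' : ∀ x y : g, ρ ⁅x, y⁆ = ⁅ρ x, ρ y⁆ - ρ (t x y) + ρ (t y x) := by
    intro x y
    have h := hρ x y
    rw [map_add, map_sub] at h
    rw [← h]; abel
  have hpl2' : ∀ x y z : g, t ⁅x, y⁆ z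
      = t x (t y z) - t y (t x z) - t (t x y) z + t (t y x) z := by
    intro x y z
    have h := hpl2 x y z
    rw [map_sub, map_add, LinearMap.sub_apply, LinearMap.add_apply] at h
    rw [← h]; abel
  refine ⟨st14bL, st14tL t ρ, st14ρL ρ,
    fun f₁ f₂ x₁ x₂ => st14bL_tmul f₁ f₂ x₁ x₂,
    fun f₁ f₂ x₁ x₂ => st14tL_tmul t ρ f₁ f₂ x₁ x₂,
    fun f x => rfl,
    fun x => lie_self x,
    fun x y z => lie_jacobi x y z,
    ?_, ?_, ?_, ?_, ?_, ?_⟩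
  · -- tL x (bL y z) = bL (tL x y) z + bL y (tL x z)
    intro x y z
    induction x using TensorProduct.induction_on with
    | zero => simp
    | add u v hu hv =>
        simp only [map_add, map_sub, LinearMap.add_apply, LinearMap.sub_apply] at hu hv ⊢
        refine Eq.trans ?_ ((congrArg₂ (· + ·) hu hv).trans ?_) <;> abel
    | tmul a x =>
      induction y using TensorProduct.induction_on with
      | zero => simp
      | add u v hu hv =>
          simp only [map_add, map_sub, LinearMap.add_apply, LinearMap.sub_apply] at hu hv ⊢
          refine Eq.trans ?_ ((congrArg₂ (· + ·) hu hv).trans ?_) <;> abel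
      | tmul b y =>
        induction z using TensorProduct.induction_on with
        | zero => simp
        | add u v hu hv =>
            simp only [map_add, map_sub, LinearMap.add_apply, LinearMap.sub_apply] at hu hv ⊢
            refine Eq.trans ?_ ((congrArg₂ (· + ·) hu hv).trans ?_) <;> abel
        | tmul c z =>
            simp only [st14bL_tmul, st14tL_tmul, map_add, map_sub,
              LinearMap.add_apply, LinearMap.sub_apply, tmul_add, tmul_sub, add_tmul,
              sub_tmul, hpl1, Derivation.leibniz, smul_eq_mul, mul_add, add_mul, mul_sub, sub_mul]
            ring_nf
            abel
  · -- post-Lie axiom 2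
    intro x y z
    induction x using TensorProduct.induction_on with
    | zero => simp
    | add u v hu hv =>
        simp only [map_add, map_sub, LinearMap.add_apply, LinearMap.sub_apply] at hu hv ⊢
        refine Eq.trans ?_ ((congrArg₂ (· + ·) hu hv).trans ?_) <;> abel
    | tmul a x =>
      induction y using TensorProduct.induction_on with
      | zero => simp
      | add u v hu hv =>
          simp only [map_add, map_sub, LinearMap.add_apply, LinearMap.sub_apply] at hu hv ⊢
          refine Eq.trans ?_ ((congrArg₂ (· + ·) hu hv).trans ?_) <;> abel
      | tmul b y =>
        induction z using TensorProduct.induction_on with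
        | zero => simp
        | add u v hu hv =>
            simp only [map_add, map_sub, LinearMap.add_apply, LinearMap.sub_apply] at hu hv ⊢
            refine Eq.trans ?_ ((congrArg₂ (· + ·) hu hv).trans ?_) <;> abel
        | tmul c z =>
            simp only [st14bL_tmul, st14tL_tmul, map_add, map_sub,
              LinearMap.add_apply, LinearMap.sub_apply, tmul_add, tmul_sub, add_tmul,
              sub_tmul, hpl2', hρ', Derivation.commutator_apply, Derivation.add_apply,
              Derivation.sub_apply, Derivation.leibniz, smul_eq_mul, mul_add, add_mul, mul_sub, sub_mul, tmul_add, tmul_sub, add_tmul, sub_tmul]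
            ring_nf
            abel
  · -- anchor is a homomorphism
    intro x y
    induction x using TensorProduct.induction_on with
    | zero => simp
    | add u v hu hv =>
        simp only [map_add, map_sub, LinearMap.add_apply, LinearMap.sub_apply,
          add_lie, lie_add] at hu hv ⊢
        refine Eq.trans ?_ ((congrArg₂ (· + ·) hu hv).trans ?_) <;> abel
    | tmul a x =>
      induction y using TensorProduct.induction_on with
      | zero => simp
      | add u v hu hv =>
          simp only [map_add, map_sub, LinearMap.add_apply, LinearMap.sub_apply,
            add_lie, lie_add] at hu hv ⊢
          refine Eq.trans ?_ ((congrArg₂ (· + ·) hu hv).trans ?_) <;> abel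
      | tmul b y =>
          ext c
          simp only [st14bL_tmul, st14tL_tmul, map_add, map_sub, st14ρL_tmul,
            Derivation.commutator_apply, Derivation.add_apply, Derivation.sub_apply,
            Derivation.smul_apply, Derivation.leibniz, smul_eq_mul, hρ']
          ring
  · -- tL (f • x) y = f • tL x y
    intro f x y
    induction x using TensorProduct.induction_on with
    | zero => simp
    | add u v hu hv =>
        simp only [smul_add, map_add, LinearMap.add_apply] at hu hv ⊢
        rw [hu, hv]
    | tmul a x =>
        rw [TensorProduct.smul_tmul']
        simp only [st14tL, TensorProduct.lift.tmul, LinearMap.mk₂_apply,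
          LinearMap.smul_apply, smul_eq_mul, mul_smul]
  · -- tL x (f • y) = f • tL x y + ρL x f • y
    intro f x y
    induction x using TensorProduct.induction_on with
    | zero => simp
    | add u v hu hv =>
        simp only [map_add, LinearMap.add_apply, Derivation.add_apply, add_smul, smul_add] at hu hv ⊢
        refine Eq.trans ?_ ((congrArg₂ (· + ·) hu hv).trans ?_) <;> abel
    | tmul a x =>
      induction y using TensorProduct.induction_on with
      | zero => simp
      | add u v hu hv =>
          simp only [smul_add, map_add, LinearMap.add_apply] at hu hv ⊢
          refine Eq.trans ?_ ((congrArg₂ (· + ·) hu hv).trans ?_) <;> abel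
      | tmul b y =>
          rw [TensorProduct.smul_tmul']
          simp only [st14tL_tmul, st14ρL_tmul, Derivation.smul_apply,
            Derivation.leibniz, smul_eq_mul, TensorProduct.smul_tmul', smul_add,
            tmul_add, add_tmul, mul_add, add_mul]
          ring_nf
          abel
  · -- the sub-adjacent bracket formula
    intro f₁ f₂ x₁ x₂
    simp only [st14bL_tmul, st14tL_tmul, tmul_add, tmul_sub, add_tmul, sub_tmul,
      mul_add, add_mul, mul_sub, sub_mul]
    ring_nf
    abel
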